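/- Let k be a field of characteristic ≠ 2, ℓ/k a quadratic field extension, and c ∈ k³ an ℓ-admissible triple. Then A(ℓ, c) belongs to 𝒞(k); more precisely: A(ℓ, c) is a unital 4-dimensional division k-algebra with unity (1, 0); the subspace ℓ × {0} is a subalgebra of A(ℓ, c) canonically isomorphic to the field ℓ and is contained in the right nucleus N_r(A(ℓ, c)), so that k·1 is properly contained in N_r(A(ℓ, c)); and the maps α(x, y) = (x, −y) and β(x, y) = (x̄, ȳ) form a Kleinian pair of automorphisms of A(ℓ, c). -/

import Mathlib

open Module Function

variable {k ℓ : Type}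

/-- The function `q_c : ℓ × ℓ → ℓ` associated with a triple `c = (c₁, c₂, c₃) ∈ k³`. -/
def qc [Field k] [Field ℓ] [Algebra k ℓ] (σ : ℓ ≃ₐ[k] ℓ) (c : k × k × k) (x y : ℓ) : ℓ :=
  (1 - algebraMap k ℓ c.1) * x ^ 2 + algebraMap k ℓ c.1 * (x * σ x)
    - algebraMap k ℓ c.2.1 * y ^ 2 - algebraMap k ℓ c.2.2 * (y * σ y)

/-- A triple `c ∈ k³` is `ℓ`-admissible if `q_c` is anisotropic. -/
def IsAdmissibleTriple [Field k] [Field ℓ] [Algebra k ℓ] (σ : ℓ ≃ₐ[k] ℓ)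
    (c : k × k × k) : Prop :=
  ∀ x y : ℓ, qc σ c x y = 0 → x = 0 ∧ y = 0

/-- The multiplication of the 4-dimensional `k`-algebra `A(ℓ, c)` on `ℓ × ℓ`. -/
def Amul [Field k] [Field ℓ] [Algebra k ℓ] (σ : ℓ ≃ₐ[k] ℓ) (c : k × k × k)
    (p q : ℓ × ℓ) : ℓ × ℓ :=
  (p.1 * q.1 + (algebraMap k ℓ c.2.1 * p.2 + algebraMap k ℓ c.2.2 * σ p.2) * q.2,
   p.2 * q.1 + ((1 - algebraMap k ℓ c.1) * p.1 + algebraMap k ℓ c.1 * σ p.1) * q.2)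

/-- The right nucleus of a (nonassociative) algebra with multiplication `mul`. -/
def rightNucleus {A : Type} (mul : A → A → A) : Set A :=
  {z | ∀ x y, mul (mul x y) z = mul x (mul y z)}

/-- The automorphism `α(x, y) = (x, −y)` of `A(ℓ, c)`. -/
def alphaMap [Field ℓ] (p : ℓ × ℓ) : ℓ × ℓ := (p.1, -p.2)

/-- The automorphism `β(x, y) = (x̄, ȳ)` of `A(ℓ, c)`. -/
def betaMap [Field k] [Field ℓ] [Algebra k ℓ] (σ : ℓ ≃ₐ[k] ℓ) (p : ℓ × ℓ) : ℓ × ℓ :=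
  (σ p.1, σ p.2)

lemma sigma_invol [Field k] [Field ℓ] [Algebra k ℓ]
    (hquad : finrank k ℓ = 2) (σ : ℓ ≃ₐ[k] ℓ) (hσ : ∃ x : ℓ, σ x ≠ x) :
    ∀ x : ℓ, σ (σ x) = x := by
  obtain ⟨x₀, hx₀⟩ := hσ
  have hFD : FiniteDimensional k ℓ :=
    FiniteDimensional.of_finrank_pos (by rw [hquad]; norm_num)
  have hinj : Function.Injective (algebraMap k ℓ) := (algebraMap k ℓ).injective
  have hspan : ∀ y : ℓ, ∃ p q : k, y = algebraMap k ℓ p + algebraMap k ℓ q * x₀ := by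
    intro y
    have h3 : ¬ LinearIndependent k ![(1 : ℓ), x₀, y] := by
      intro h
      have := h.fintype_card_le_finrank
      simp [hquad] at this
    rw [Fintype.not_linearIndependent_iff] at h3
    obtain ⟨g, hg, i, hi⟩ := h3
    have hsum : algebraMap k ℓ (g 0) + algebraMap k ℓ (g 1) * x₀
        + algebraMap k ℓ (g 2) * y = 0 := by
      have := hg
      simpa [Fin.sum_univ_three, Algebra.smul_def] using this
    by_cases h2 : g 2 = 0
    · exfalso
      by_cases h1 : g 1 = 0
      · have h0 : algebraMap k ℓ (g 0) = 0 := by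
          simpa [h1, h2] using hsum
        have h0' : g 0 = 0 := by
          exact hinj (by simpa using h0)
        fin_cases i <;> simp_all
      · have hg1 : algebraMap k ℓ (g 1) ≠ 0 := fun h => h1 (hinj (by simpa using h))
        have hmul : algebraMap k ℓ (g 1) * x₀ = -(algebraMap k ℓ (g 0)) := by
          linear_combination hsum - (by simp [h2] : algebraMap k ℓ (g 2) * y = 0)
        have hfix : algebraMap k ℓ (g 1) * σ x₀ = algebraMap k ℓ (g 1) * x₀ := by
          calc algebraMap k ℓ (g 1) * σ x₀ = σ (algebraMap k ℓ (g 1) * x₀) := by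
                rw [map_mul, AlgEquiv.commutes]
            _ = σ (-(algebraMap k ℓ (g 0))) := by rw [hmul]
            _ = -(algebraMap k ℓ (g 0)) := by rw [map_neg, AlgEquiv.commutes]
            _ = algebraMap k ℓ (g 1) * x₀ := hmul.symm
        exact hx₀ (mul_left_cancel₀ hg1 hfix)
    · refine ⟨-(g 0) / g 2, -(g 1) / g 2, ?_⟩
      have hg2 : algebraMap k ℓ (g 2) ≠ 0 := fun h => h2 (hinj (by simpa using h))
      have e1 : algebraMap k ℓ (-(g 0) / g 2)
          = -(algebraMap k ℓ (g 0)) / algebraMap k ℓ (g 2) := by rw [map_div₀, map_neg]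
      have e2 : algebraMap k ℓ (-(g 1) / g 2)
          = -(algebraMap k ℓ (g 1)) / algebraMap k ℓ (g 2) := by rw [map_div₀, map_neg]
      rw [e1, e2, div_mul_eq_mul_div, ← add_div, eq_div_iff hg2]
      linear_combination hsum
  obtain ⟨cc, dd, hx2'⟩ := hspan (x₀ ^ 2)
  have hu2 : (σ x₀) ^ 2 = algebraMap k ℓ cc + algebraMap k ℓ dd * σ x₀ := by
    have := congrArg σ hx2'
    simpa [map_add, map_mul, map_pow] using this
  have hfac : (σ x₀ - x₀) * (σ x₀ + x₀ - algebraMap k ℓ dd) = 0 := by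
    linear_combination hu2 - hx2'
  have hne : σ x₀ - x₀ ≠ 0 := sub_ne_zero.mpr hx₀
  have hsx : σ x₀ = algebraMap k ℓ dd - x₀ := by
    rcases mul_eq_zero.mp hfac with h | h
    · exact absurd h hne
    · linear_combination h
  have hkey : σ (σ x₀) = x₀ := by
    rw [hsx, map_sub, AlgEquiv.commutes, hsx]; ring
  intro x
  obtain ⟨p, q, hx⟩ := hspan x
  rw [hx]
  simp [map_add, map_mul, hkey]

/-- For an `ℓ`-admissible triple `c`, the algebra `A(ℓ, c)` belongs to `𝒞(k)`:
it is a 4-dimensional unital division `k`-algebra with unity `(1, 0)`; the subspace `ℓ × {0}`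
is a subalgebra canonically isomorphic to `ℓ` (via the injective `k`-linear multiplicative map
`x ↦ (x, 0)`) contained in the right nucleus, so that `k·1` is properly contained in the right
nucleus; and `α(x, y) = (x, −y)`, `β(x, y) = (x̄, ȳ)` form a Kleinian pair of automorphisms. -/
theorem Amul_mem_C [Field k] [Field ℓ] [Algebra k ℓ]
    (hchar : (2 : k) ≠ 0) (hquad : finrank k ℓ = 2)
    (σ : ℓ ≃ₐ[k] ℓ) (hσ : ∃ x : ℓ, σ x ≠ x)
    (c : k × k × k) (hc : IsAdmissibleTriple σ c) :
    -- division algebra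
    (∀ a : ℓ × ℓ, a ≠ 0 →
        Function.Bijective (fun p => Amul σ c a p) ∧
        Function.Bijective (fun p => Amul σ c p a)) ∧
    -- 4-dimensional over k
    finrank k (ℓ × ℓ) = 4 ∧
    -- unital with unity (1, 0)
    (∀ p : ℓ × ℓ, Amul σ c (1, 0) p = p ∧ Amul σ c p (1, 0) = p) ∧
    -- ℓ × {0} is a subalgebra canonically isomorphic to ℓ
    (∀ x y : ℓ, Amul σ c (x, 0) (y, 0) = (x * y, 0)) ∧
    Function.Injective (fun x : ℓ => ((x, 0) : ℓ × ℓ)) ∧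
    -- ℓ × {0} is contained in the right nucleus
    (∀ x : ℓ, ((x, 0) : ℓ × ℓ) ∈ rightNucleus (Amul σ c)) ∧
    -- k·1 is properly contained in the right nucleus
    Set.range (fun t : k => ((algebraMap k ℓ t, 0) : ℓ × ℓ)) ⊂ rightNucleus (Amul σ c) ∧
    -- (α, β) is a Kleinian pair of automorphisms of A(ℓ, c)
    ((∀ p q : ℓ × ℓ, alphaMap (p + q) = alphaMap p + alphaMap q) ∧
     (∀ (t : k) (p : ℓ × ℓ), alphaMap (t • p) = t • (alphaMap p : ℓ × ℓ)) ∧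
     (∀ p q : ℓ × ℓ, betaMap σ (p + q) = betaMap σ p + betaMap σ q) ∧
     (∀ (t : k) (p : ℓ × ℓ), betaMap σ (t • p) = t • betaMap σ p) ∧
     Function.Bijective (alphaMap (ℓ := ℓ)) ∧
     Function.Bijective (betaMap σ) ∧
     (∀ p q : ℓ × ℓ, alphaMap (Amul σ c p q) = Amul σ c (alphaMap p) (alphaMap q)) ∧
     (∀ p q : ℓ × ℓ, betaMap σ (Amul σ c p q) = Amul σ c (betaMap σ p) (betaMap σ q)) ∧
     (∀ p : ℓ × ℓ, alphaMap (alphaMap p) = p) ∧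
     (∀ p : ℓ × ℓ, betaMap σ (betaMap σ p) = p) ∧
     (∀ p : ℓ × ℓ, alphaMap (betaMap σ p) = betaMap σ (alphaMap p)) ∧
     alphaMap (ℓ := ℓ) ≠ id ∧ betaMap σ ≠ id ∧ alphaMap (ℓ := ℓ) ≠ betaMap σ) := by
  have hFD : FiniteDimensional k ℓ :=
    FiniteDimensional.of_finrank_pos (by rw [hquad]; norm_num)
  have hinjA : Function.Injective (algebraMap k ℓ) := (algebraMap k ℓ).injective
  have hσσ : ∀ x : ℓ, σ (σ x) = x := sigma_invol hquad σ hσ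
  have h2ℓ : (2 : ℓ) ≠ 0 := by
    intro h
    apply hchar
    apply hinjA
    rw [map_ofNat, map_zero]
    exact h
  -- kernel conditions
  have keyL : ∀ a : ℓ × ℓ, a ≠ 0 → ∀ p : ℓ × ℓ, Amul σ c a p = 0 → p = 0 := by
    intro a ha p hp
    have hqc : qc σ c a.1 a.2 ≠ 0 := by
      intro h
      obtain ⟨e1, e2⟩ := hc a.1 a.2 h
      exact ha (Prod.ext e1 e2)
    rw [Amul, Prod.ext_iff] at hp
    obtain ⟨h1, h2⟩ := hp
    simp only [Prod.fst_zero, Prod.snd_zero] at h1 h2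
    have k1 : qc σ c a.1 a.2 * p.1 = 0 := by
      simp only [qc]
      linear_combination ((1 - algebraMap k ℓ c.1) * a.1 + algebraMap k ℓ c.1 * σ a.1) * h1
        - (algebraMap k ℓ c.2.1 * a.2 + algebraMap k ℓ c.2.2 * σ a.2) * h2
    have k2 : qc σ c a.1 a.2 * p.2 = 0 := by
      simp only [qc]
      linear_combination a.1 * h2 - a.2 * h1
    exact Prod.ext (by simpa [hqc] using k1) (by simpa [hqc] using k2)
  have keyR : ∀ a : ℓ × ℓ, a ≠ 0 → ∀ p : ℓ × ℓ, Amul σ c p a = 0 → p = 0 := by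
    intro a ha p hp
    rw [Amul, Prod.ext_iff] at hp
    obtain ⟨h1, h2⟩ := hp
    simp only [Prod.fst_zero, Prod.snd_zero] at h1 h2
    have key : qc σ c p.1 p.2 * a.2 = 0 := by
      simp only [qc]
      linear_combination p.1 * h2 - p.2 * h1
    by_cases ha2 : a.2 = 0
    · have ha1 : a.1 ≠ 0 := fun h => ha (Prod.ext h ha2)
      rw [ha2] at h1 h2
      simp only [mul_zero, add_zero] at h1 h2
      exact Prod.ext ((mul_eq_zero.mp h1).resolve_right ha1)
        ((mul_eq_zero.mp h2).resolve_right ha1)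
    · have hq0 : qc σ c p.1 p.2 = 0 := (mul_eq_zero.mp key).resolve_right ha2
      obtain ⟨e1, e2⟩ := hc p.1 p.2 hq0
      exact Prod.ext e1 e2
  have hnuc : ∀ x : ℓ, ((x, 0) : ℓ × ℓ) ∈ rightNucleus (Amul σ c) := by
    intro x p q
    refine Prod.ext ?_ ?_ <;> simp [Amul] <;> ring
  refine ⟨?_, ?_, ?_, ?_, ?_, hnuc, ?_, ?_⟩
  · -- division algebra
    intro a ha
    constructor
    · let L : (ℓ × ℓ) →ₗ[k] (ℓ × ℓ) :=
        { toFun := fun p => Amul σ c a p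
          map_add' := by
            intro p q
            refine Prod.ext ?_ ?_ <;> simp [Amul] <;> ring
          map_smul' := by
            intro t p
            refine Prod.ext ?_ ?_ <;>
              simp [Amul, Algebra.smul_def] <;> ring }
      have hLinj : Function.Injective L := by
        intro p q hpq
        have h0 : L (p - q) = 0 := by rw [map_sub, sub_eq_zero]; exact hpq
        exact sub_eq_zero.mp (keyL a ha (p - q) h0)
      exact ⟨hLinj, LinearMap.injective_iff_surjective.mp hLinj⟩
    · let R : (ℓ × ℓ) →ₗ[k] (ℓ × ℓ) :=
        { toFun := fun p => Amul σ c p a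
          map_add' := by
            intro p q
            refine Prod.ext ?_ ?_ <;> simp [Amul, map_add] <;> ring
          map_smul' := by
            intro t p
            refine Prod.ext ?_ ?_ <;>
              simp [Amul, Algebra.smul_def, map_mul, AlgEquiv.commutes] <;> ring }
      have hRinj : Function.Injective R := by
        intro p q hpq
        have h0 : R (p - q) = 0 := by rw [map_sub, sub_eq_zero]; exact hpq
        exact sub_eq_zero.mp (keyR a ha (p - q) h0)
      exact ⟨hRinj, LinearMap.injective_iff_surjective.mp hRinj⟩
  · -- dimension
    rw [Module.finrank_prod, hquad]
  · -- unital
    intro p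
    refine ⟨Prod.ext ?_ ?_, Prod.ext ?_ ?_⟩ <;> simp [Amul] <;> ring
  · -- subalgebra
    intro x y
    refine Prod.ext ?_ ?_ <;> simp [Amul]
  · -- injective
    intro x y h
    simpa using h
  · -- proper containment
    have hsub : Set.range (fun t : k => ((algebraMap k ℓ t, 0) : ℓ × ℓ))
        ⊆ rightNucleus (Amul σ c) := by
      rintro _ ⟨t, rfl⟩
      exact hnuc (algebraMap k ℓ t)
    rw [Set.ssubset_iff_of_subset hsub]
    obtain ⟨x₀, hx₀⟩ := hσ
    refine ⟨(x₀, 0), hnuc x₀, ?_⟩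
    rintro ⟨t, ht⟩
    have hx : algebraMap k ℓ t = x₀ := congrArg Prod.fst ht
    exact hx₀ (by rw [← hx, AlgEquiv.commutes])
  · -- Kleinian pair
    have hαinv : ∀ p : ℓ × ℓ, alphaMap (alphaMap p) = p := by
      intro p; simp [alphaMap]
    have hβinv : ∀ p : ℓ × ℓ, betaMap σ (betaMap σ p) = p := by
      intro p; simp [betaMap, hσσ]
    obtain ⟨x₀, hx₀⟩ := hσ
    refine ⟨?_, ?_, ?_, ?_, ?_, ?_, ?_, ?_, hαinv, hβinv, ?_, ?_, ?_, ?_⟩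
    · intro p q; simp [alphaMap, Prod.ext_iff, add_comm]
    · intro t p; simp [alphaMap, Prod.ext_iff, smul_neg]
    · intro p q; simp [betaMap, Prod.ext_iff, map_add]
    · intro t p
      refine Prod.ext ?_ ?_ <;>
        simp [betaMap, Algebra.smul_def, map_mul, AlgEquiv.commutes]
    · exact Function.Involutive.bijective hαinv
    · exact Function.Involutive.bijective hβinv
    · intro p q
      refine Prod.ext ?_ ?_ <;> simp [alphaMap, Amul, map_neg] <;> ring
    · intro p q
      refine Prod.ext ?_ ?_ <;>
        simp [betaMap, Amul, map_add, map_mul, map_sub, map_one, AlgEquiv.commutes] <;> ring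
    · intro p; simp [alphaMap, betaMap, map_neg]
    · intro h
      have h1 : ((0 : ℓ), -(1 : ℓ)) = ((0 : ℓ), (1 : ℓ)) := by
        have := congrFun h ((0 : ℓ), (1 : ℓ))
        simpa [alphaMap] using this
      have h2 : (-1 : ℓ) = 1 := (Prod.ext_iff.mp h1).2
      exact h2ℓ (by linear_combination -h2)
    · intro h
      have := congrFun h (x₀, (0 : ℓ))
      simp only [betaMap, id_eq, Prod.ext_iff] at this
      exact hx₀ this.1
    · intro h
      have := congrFun h (x₀, (0 : ℓ))
      simp only [alphaMap, betaMap, Prod.ext_iff] at this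
      exact hx₀ this.1.symm
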